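/- Let I be a (full-supported) matroidal ideal of degree d ≥ 2 in R = k[x_1,...,x_n]. Then I is an unmixed ideal if and only if for every i with 1 ≤ i ≤ n, the colon ideal (I : x_i) is unmixed and height(I) = height(I : x_i). -/

import Mathlib

open MvPolynomial

namespace PaperDefs

variable {k : Type*} [Field k] {n : ℕ}

/-- The total degree of an exponent vector. -/
def edeg (a : Fin n →₀ ℕ) : ℕ := ∑ i, a i

/-- `I` is a monomial ideal: it is generated by a set of monomials. -/
def IsMonomialIdeal (I : Ideal (MvPolynomial (Fin n) k)) : Prop :=
  ∃ S : Set (Fin n →₀ ℕ),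
    I = Ideal.span ((fun a => (MvPolynomial.monomial a (1 : k))) '' S)

/-- The (exponent vectors of the) unique minimal monomial generating set `G(I)`:
monomials of `I` that are minimal with respect to divisibility. -/
def minGens (I : Ideal (MvPolynomial (Fin n) k)) : Set (Fin n →₀ ℕ) :=
  {a | (MvPolynomial.monomial a (1 : k)) ∈ I ∧
    ∀ b : Fin n →₀ ℕ, b < a → (MvPolynomial.monomial b (1 : k)) ∉ I}

/-- A squarefree exponent vector. -/
def SqFree (a : Fin n →₀ ℕ) : Prop := ∀ i, a i ≤ 1

/-- `I` is a polymatroidal ideal of degree `d`. -/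
def IsPolymatroidal (I : Ideal (MvPolynomial (Fin n) k)) (d : ℕ) : Prop :=
  IsMonomialIdeal I ∧ I ≠ ⊥ ∧
  (∀ a ∈ minGens I, edeg a = d) ∧
  ∀ a ∈ minGens I, ∀ b ∈ minGens I, ∀ i : Fin n, b i < a i →
    ∃ j : Fin n, a j < b j ∧
      (MvPolynomial.monomial (a - Finsupp.single i 1 + Finsupp.single j 1) (1 : k)) ∈ I

/-- `I` is a matroidal ideal of degree `d`: a squarefree polymatroidal ideal. -/
def IsMatroidal (I : Ideal (MvPolynomial (Fin n) k)) (d : ℕ) : Prop :=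
  IsPolymatroidal I d ∧ ∀ a ∈ minGens I, SqFree a

/-- `I` is full-supported: every variable divides some minimal generator. -/
def FullSupported (I : Ideal (MvPolynomial (Fin n) k)) : Prop :=
  ∀ i : Fin n, ∃ a ∈ minGens I, a i ≠ 0

/-- The maximal graded ideal `(x_1, ..., x_n)`. -/
noncomputable def varIdeal (k : Type*) [Field k] (n : ℕ) : Ideal (MvPolynomial (Fin n) k) :=
  Ideal.span (Set.range MvPolynomial.X)

/-- The colon ideal `(I : x_i)`. -/
noncomputable def colonVar (I : Ideal (MvPolynomial (Fin n) k)) (i : Fin n) :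
    Ideal (MvPolynomial (Fin n) k) :=
  I.colon ((Ideal.span {MvPolynomial.X i} : Ideal (MvPolynomial (Fin n) k)) : Set (MvPolynomial (Fin n) k))

/-- The height of an ideal: the infimum of `Order.height` over the primes containing it. -/
noncomputable def ht {R : Type*} [CommRing R] (I : Ideal R) : ℕ∞ :=
  ⨅ (p : PrimeSpectrum R) (_ : I ≤ p.asIdeal), Order.height p

/-- `I` is unmixed: all associated primes of `R/I` have the same height. -/
def IsUnmixed (I : Ideal (MvPolynomial (Fin n) k)) : Prop :=
  ∀ p ∈ associatedPrimes (MvPolynomial (Fin n) k) (MvPolynomial (Fin n) k ⧸ I),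
    ∀ q ∈ associatedPrimes (MvPolynomial (Fin n) k) (MvPolynomial (Fin n) k ⧸ I),
      ht p = ht q

/-- The arithmetical rank of `I`. -/
noncomputable def ara (I : Ideal (MvPolynomial (Fin n) k)) : ℕ :=
  sInf {t : ℕ | ∃ f : Fin t → MvPolynomial (Fin n) k,
    (Ideal.span (Set.range f)).radical = I.radical}

/-- The squarefree Veronese ideal of degree `d`. -/
noncomputable def sqfreeVeronese (k : Type*) [Field k] (n d : ℕ) : Ideal (MvPolynomial (Fin n) k) :=
  Ideal.span ((fun s : Finset (Fin n) => ∏ i ∈ s, MvPolynomial.X i) ''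
    {s : Finset (Fin n) | s.card = d})

/-- The depth of `R/I` : the supremum of lengths of `R/I`-regular sequences consisting of
elements of the maximal graded ideal. -/
noncomputable def quotDepth (I : Ideal (MvPolynomial (Fin n) k)) : ℕ :=
  sSup {r : ℕ | ∃ rs : List (MvPolynomial (Fin n) k), rs.length = r ∧
    (∀ x ∈ rs, x ∈ varIdeal k n) ∧
    RingTheory.Sequence.IsRegular (MvPolynomial (Fin n) k ⧸ I) rs}

/-- `R/I` is Cohen–Macaulay: the depth of `R/I` equals its Krull dimension. -/
def IsCohenMacaulayQuot (I : Ideal (MvPolynomial (Fin n) k)) : Prop :=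
  (quotDepth I : WithBot ℕ∞) = ringKrullDim (MvPolynomial (Fin n) k ⧸ I)

end PaperDefs

namespace Statement7Aux
open PaperDefs

section Gen
variable {A : Type*} [CommRing A]

lemma smul_mk (J : Ideal A) (r f : A) :
    r • Ideal.Quotient.mk J f = Ideal.Quotient.mk J (r * f) := rfl

lemma le_of_isAssociated {J p : Ideal A} (hp : IsAssociatedPrime p (A ⧸ J)) : J ≤ p := by
  obtain ⟨hpp, x, rfl⟩ := hp
  obtain ⟨f, rfl⟩ := Ideal.Quotient.mk_surjective x
  intro r hr
  apply Ideal.le_radical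
  rw [Submodule.mem_colon_singleton, Submodule.mem_bot, smul_mk, Ideal.Quotient.eq_zero_iff_mem]
  exact J.mul_mem_right f hr

lemma isAss_of_colon [IsNoetherianRing A] {I : Ideal A} {x : A} {p : Ideal A}
    (hp : IsAssociatedPrime p (A ⧸ I.colon (Ideal.span {x}))) : IsAssociatedPrime p (A ⧸ I) := by
  obtain ⟨hpp, y, hy⟩ := isAssociatedPrime_iff.mp hp
  obtain ⟨f, rfl⟩ := Ideal.Quotient.mk_surjective y
  refine isAssociatedPrime_iff.mpr ⟨hpp, Ideal.Quotient.mk I (f * x), ?_⟩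
  rw [hy]
  ext r
  rw [Submodule.mem_colon_singleton, Submodule.mem_bot, Submodule.mem_colon_singleton,
    Submodule.mem_bot,
    smul_mk, smul_mk, Ideal.Quotient.eq_zero_iff_mem, Ideal.Quotient.eq_zero_iff_mem,
    Ideal.mem_colon_span_singleton, mul_assoc]

lemma isAss_colon_of_not_mem [IsNoetherianRing A] {I p : Ideal A} (hp : IsAssociatedPrime p (A ⧸ I)) {x : A}
    (hx : x ∉ p) : IsAssociatedPrime p (A ⧸ I.colon (Ideal.span {x})) := by
  obtain ⟨hpp, y, hy⟩ := isAssociatedPrime_iff.mp hp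
  obtain ⟨f, rfl⟩ := Ideal.Quotient.mk_surjective y
  refine isAssociatedPrime_iff.mpr ⟨hpp, Ideal.Quotient.mk _ f, ?_⟩
  ext r
  rw [Submodule.mem_colon_singleton, Submodule.mem_bot, smul_mk, Ideal.Quotient.eq_zero_iff_mem,
    Ideal.mem_colon_span_singleton]
  have hrx : r * f * x ∈ I ↔ r * x ∈ p := by
    rw [hy, Submodule.mem_colon_singleton, Submodule.mem_bot, smul_mk, Ideal.Quotient.eq_zero_iff_mem,
      mul_right_comm]
  rw [hrx]
  constructor
  · exact fun h => p.mul_mem_right x h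
  · intro h
    rcases hpp.mem_or_mem h with h' | h'
    · exact h'
    · exact absurd h' hx

lemma ht_le {I : Ideal A} {q : PrimeSpectrum A} (hq : I ≤ q.asIdeal) :
    ht I ≤ Order.height q := by
  unfold ht
  exact iInf_le_of_le q (iInf_le_of_le hq le_rfl)

lemma le_ht {I : Ideal A} {c : ℕ∞}
    (h : ∀ q : PrimeSpectrum A, I ≤ q.asIdeal → c ≤ Order.height q) :
    c ≤ ht I := by
  unfold ht
  exact le_iInf fun q => le_iInf fun hq => h q hq

lemma ht_mono {I J : Ideal A} (h : I ≤ J) : ht I ≤ ht J :=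
  le_ht fun _ hq => ht_le (le_trans h hq)

lemma ht_eq_of_ass [IsNoetherianRing A] {J : Ideal A}
    (hmix : ∀ p ∈ associatedPrimes A (A ⧸ J), ∀ q ∈ associatedPrimes A (A ⧸ J), ht p = ht q)
    (hassmin : ∀ q ∈ J.minimalPrimes, q ∈ associatedPrimes A (A ⧸ J))
    {p : Ideal A} (hp : p ∈ associatedPrimes A (A ⧸ J)) :
    ht J = ht p := by
  refine le_antisymm (ht_mono (le_of_isAssociated hp)) (le_ht fun q hq => ?_)
  haveI := q.2
  obtain ⟨p₁, hp₁, hple⟩ := Ideal.exists_minimalPrimes_le hq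
  rw [hmix p hp p₁ (hassmin p₁ hp₁)]
  exact ht_le hple

end Gen

variable {k : Type*} [Field k] {n : ℕ}

lemma memspan {G : Set (Fin n →₀ ℕ)} {f : MvPolynomial (Fin n) k} :
    f ∈ Ideal.span ((fun a => (MvPolynomial.monomial a (1 : k))) '' G) ↔
      ∀ a ∈ f.support, ∃ b ∈ G, b ≤ a :=
  MvPolynomial.mem_ideal_span_monomial_image

lemma mono_memspan {G : Set (Fin n →₀ ℕ)} {a : Fin n →₀ ℕ} :
    (monomial a (1:k)) ∈ Ideal.span ((fun a => (MvPolynomial.monomial a (1 : k))) '' G) ↔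
      ∃ b ∈ G, b ≤ a := by
  classical
  rw [memspan, support_monomial]
  simp

lemma support_mul_monomial (p : MvPolynomial (Fin n) k) (a : Fin n →₀ ℕ) :
    (p * monomial a (1:k)).support = p.support.map (addRightEmbedding a) :=
  AddMonoidAlgebra.support_coeff_mul_single p _ (by simp) _

lemma exists_var_of_monomial_mem {p : Ideal (MvPolynomial (Fin n) k)} (hp : p.IsPrime)
    {b : Fin n →₀ ℕ} (hb : (monomial b (1:k)) ∈ p) : ∃ i, X i ∈ p ∧ b i ≠ 0 := by
  rw [monomial_eq, map_one, one_mul, Finsupp.prod] at hb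
  have : ∃ i ∈ b.support, (X i : MvPolynomial (Fin n) k) ^ b i ∈ p := by
    rw [← Ideal.IsPrime.prod_mem_iff]
    exact hb
  obtain ⟨i, hi, hpow⟩ := this
  exact ⟨i, hp.mem_of_pow_mem _ hpow, Finsupp.mem_support_iff.mp hi⟩

/-- The prime ideal generated by a set of variables. -/
noncomputable def varsSpan (k : Type*) [Field k] {n : ℕ} (C : Set (Fin n)) :
    Ideal (MvPolynomial (Fin n) k) :=
  Ideal.span ((fun a => (MvPolynomial.monomial a (1 : k))) ''
    ((fun c => Finsupp.single c 1) '' C))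

lemma mem_varsSpan {C : Set (Fin n)} {f : MvPolynomial (Fin n) k} :
    f ∈ varsSpan k C ↔ ∀ a ∈ f.support, ∃ c ∈ C, a c ≠ 0 := by
  rw [varsSpan, memspan]
  refine forall₂_congr fun a _ => ?_
  constructor
  · rintro ⟨b, ⟨c, hc, rfl⟩, hle⟩
    exact ⟨c, hc, by have := Finsupp.single_le_iff.mp hle; omega⟩
  · rintro ⟨c, hc, hne⟩
    exact ⟨Finsupp.single c 1, ⟨c, hc, rfl⟩, Finsupp.single_le_iff.mpr (by omega)⟩

lemma X_mem_varsSpan {C : Set (Fin n)} {c : Fin n} (hc : c ∈ C) :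
    (X c : MvPolynomial (Fin n) k) ∈ varsSpan k C := by
  rw [mem_varsSpan]
  intro a ha
  rw [support_X] at ha
  simp only [Finset.mem_singleton] at ha
  exact ⟨c, hc, by simp [ha]⟩

lemma varsSpan_isPrime (C : Set (Fin n)) : (varsSpan k C).IsPrime := by
  classical
  set φ : MvPolynomial (Fin n) k →ₐ[k] MvPolynomial (Fin n) k :=
    aeval (fun j => if j ∈ C then 0 else X j) with hφ
  have hker : ∀ f : MvPolynomial (Fin n) k, f ∈ varsSpan k C ↔ φ f = 0 := by
    intro f
    constructor
    · intro hf
      have hle : varsSpan k C ≤ RingHom.ker φ.toRingHom := by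
        rw [varsSpan, Ideal.span_le]
        rintro - ⟨-, ⟨c, hc, rfl⟩, rfl⟩
        simp only [SetLike.mem_coe, RingHom.mem_ker]
        show φ (X c) = 0
        simp [hφ, hc]
      exact hle hf
    · intro h0
      have hcomp : (Ideal.Quotient.mkₐ k (varsSpan k C)).comp φ
          = Ideal.Quotient.mkₐ k (varsSpan k C) := by
        apply MvPolynomial.algHom_ext
        intro j
        simp only [AlgHom.comp_apply, Ideal.Quotient.mkₐ_eq_mk, hφ, aeval_X]
        split_ifs with hj
        · rw [map_zero, eq_comm, Ideal.Quotient.eq_zero_iff_mem]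
          exact X_mem_varsSpan hj
        · rfl
      have := AlgHom.congr_fun hcomp f
      simp only [AlgHom.comp_apply, Ideal.Quotient.mkₐ_eq_mk, h0, map_zero] at this
      rw [eq_comm, Ideal.Quotient.eq_zero_iff_mem] at this
      exact this
  constructor
  · intro htop
    have h1 : (1 : MvPolynomial (Fin n) k) ∈ varsSpan k C := htop ▸ Submodule.mem_top
    rw [hker, map_one] at h1
    exact one_ne_zero h1
  · intro x y hxy
    rw [hker, map_mul] at hxy
    rcases mul_eq_zero.mp hxy with h | h
    · exact Or.inl ((hker x).mpr h)
    · exact Or.inr ((hker y).mpr h)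

lemma span_le_varsSpan {G : Set (Fin n →₀ ℕ)} {C : Set (Fin n)}
    (h : ∀ b ∈ G, ∃ c ∈ C, b c ≠ 0) :
    Ideal.span ((fun a => (MvPolynomial.monomial a (1 : k))) '' G) ≤ varsSpan k C := by
  rw [Ideal.span_le]
  rintro - ⟨b, hb, rfl⟩
  simp only [SetLike.mem_coe]
  show (monomial b (1:k)) ∈ varsSpan k C
  classical
  rw [mem_varsSpan, support_monomial]
  simpa using h b hb

lemma minPrimes_subset_ass (G : Set (Fin n →₀ ℕ)) (hsq : ∀ b ∈ G, SqFree b)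
    {p : Ideal (MvPolynomial (Fin n) k)}
    (hp : p ∈ (Ideal.span ((fun a => (MvPolynomial.monomial a (1 : k))) '' G)).minimalPrimes) :
    IsAssociatedPrime p
      (MvPolynomial (Fin n) k ⧸
        Ideal.span ((fun a => (MvPolynomial.monomial a (1 : k))) '' G)) := by
  classical
  set J := Ideal.span ((fun a => (MvPolynomial.monomial a (1 : k))) '' G) with hJdef
  have hpp : p.IsPrime := hp.1.1
  have hJp : J ≤ p := hp.1.2
  set C : Set (Fin n) := {i | X i ∈ p} with hC
  have hcov : ∀ b ∈ G, ∃ c ∈ C, b c ≠ 0 := fun b hb =>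
    exists_var_of_monomial_mem hpp (hJp (Ideal.subset_span ⟨b, hb, rfl⟩))
  have hJP : J ≤ varsSpan k C := span_le_varsSpan hcov
  have hPp : varsSpan k C ≤ p := by
    rw [varsSpan, Ideal.span_le]
    rintro - ⟨-, ⟨c, hc, rfl⟩, rfl⟩
    exact hc
  have hpeq : p = varsSpan k C := le_antisymm (hp.2 ⟨varsSpan_isPrime C, hJP⟩ hPp) hPp
  have hminc : ∀ c ∈ C, ∃ b ∈ G, (∀ j, j ∈ C → j ≠ c → b j = 0) ∧ b c ≠ 0 := by
    intro c hc
    by_contra hcon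
    push_neg at hcon
    have hcov' : ∀ b ∈ G, ∃ j ∈ C \ {c}, b j ≠ 0 := by
      intro b hb
      by_contra h2
      push_neg at h2
      have hj0 : ∀ j, j ∈ C → j ≠ c → b j = 0 := fun j hj hjc => h2 j ⟨hj, hjc⟩
      have hbc := hcon b hb hj0
      obtain ⟨j, hjC, hjne⟩ := hcov b hb
      rcases eq_or_ne j c with rfl | hne
      · exact hjne hbc
      · exact hjne (hj0 j hjC hne)
    have hle : p ≤ varsSpan k (C \ {c}) :=
      hp.2 ⟨varsSpan_isPrime _, span_le_varsSpan hcov'⟩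
        (le_trans (Ideal.span_mono (Set.image_mono (Set.image_mono Set.diff_subset)))
          (hpeq ▸ le_refl p))
    have hXc : (X c : MvPolynomial (Fin n) k) ∈ varsSpan k (C \ {c}) := hle hc
    rw [mem_varsSpan] at hXc
    obtain ⟨j, hj, hne⟩ := hXc (Finsupp.single c 1) (by rw [support_X]; simp)
    rw [Finsupp.single_apply_ne_zero] at hne
    exact hj.2 (Set.mem_singleton_iff.mpr hne.1)
  set aC : Fin n →₀ ℕ := Finsupp.equivFunOnFinite.symm (fun j => if j ∈ C then 0 else 1)
    with haCdef
  have haC : ∀ j, aC j = if j ∈ C then 0 else 1 := fun j => rfl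
  refine isAssociatedPrime_iff.mpr ⟨hpp, Ideal.Quotient.mk J (monomial aC 1), ?_⟩
  ext r
  rw [Submodule.mem_colon_singleton, Submodule.mem_bot, smul_mk, Ideal.Quotient.eq_zero_iff_mem]
  constructor
  · intro hr
    have hcolon : p ≤ J.colon (Ideal.span {monomial aC (1:k)}) := by
      rw [hpeq, varsSpan, Ideal.span_le]
      rintro - ⟨-, ⟨c, hc, rfl⟩, rfl⟩
      simp only [SetLike.mem_coe]
      show (monomial (Finsupp.single c 1) (1:k)) ∈ J.colon (Ideal.span {monomial aC (1:k)})
      rw [Ideal.mem_colon_span_singleton, monomial_mul, mul_one, hJdef, mono_memspan]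
      obtain ⟨b, hb, hb0, hbc⟩ := hminc c hc
      refine ⟨b, hb, Finsupp.le_def.mpr fun j => ?_⟩
      rw [Finsupp.add_apply, Finsupp.single_apply, haC j]
      rcases eq_or_ne c j with rfl | hne
      · simp [hc, hsq b hb c]
      · by_cases hjC : j ∈ C
        · simp [hne, hjC, hb0 j hjC (Ne.symm hne)]
        · have := hsq b hb j
          simp [hne, hjC]
          omega
    exact Ideal.mem_colon_span_singleton.mp (hcolon hr)
  · intro hr
    by_contra hrp
    rw [hpeq, mem_varsSpan] at hrp
    push_neg at hrp
    obtain ⟨a, ha, ha0⟩ := hrp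
    rw [hJdef, memspan] at hr
    have hmem : a + aC ∈ (r * monomial aC (1:k)).support := by
      rw [support_mul_monomial]
      exact Finset.mem_map.mpr ⟨a, ha, rfl⟩
    obtain ⟨b, hb, hle⟩ := hr _ hmem
    obtain ⟨c, hc, hbc⟩ := hcov b hb
    have hble : b c ≤ (a + aC) c := Finsupp.le_def.mp hle c
    rw [Finsupp.add_apply, ha0 c hc, haC c, if_pos hc] at hble
    omega

lemma edeg_mono {a b : Fin n →₀ ℕ} (h : a ≤ b) : edeg a ≤ edeg b :=
  Finset.sum_le_sum fun i _ => Finsupp.le_def.mp h i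

lemma edeg_strict_mono {a b : Fin n →₀ ℕ} (h : a < b) : edeg a < edeg b := by
  obtain ⟨hle, hne⟩ := lt_iff_le_and_ne.mp h
  have : ∃ i, a i < b i := by
    by_contra hc
    push_neg at hc
    exact hne (Finsupp.ext fun i => le_antisymm (Finsupp.le_def.mp hle i) (hc i))
  obtain ⟨i, hi⟩ := this
  exact Finset.sum_lt_sum (fun j _ => Finsupp.le_def.mp hle j) ⟨i, Finset.mem_univ i, hi⟩

lemma edeg_single (i : Fin n) : edeg (Finsupp.single i 1) = 1 := by
  classical
  simp [edeg, Finsupp.single_apply]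

lemma exists_minGen {I : Ideal (MvPolynomial (Fin n) k)} :
    ∀ N (a : Fin n →₀ ℕ), edeg a ≤ N → (monomial a (1:k)) ∈ I → ∃ b ∈ minGens I, b ≤ a := by
  intro N
  induction N with
  | zero =>
    intro a ha hm
    refine ⟨a, ⟨hm, fun b hb => ?_⟩, le_refl a⟩
    intro _
    have := edeg_strict_mono hb
    omega
  | succ N ih =>
    intro a ha hm
    by_cases hc : ∃ b, b < a ∧ (monomial b (1:k)) ∈ I
    · obtain ⟨b, hb, hbm⟩ := hc
      have hN : edeg b ≤ N := by have := edeg_strict_mono hb; omega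
      obtain ⟨c, hcG, hcle⟩ := ih b hN hbm
      exact ⟨c, hcG, le_trans hcle hb.le⟩
    · push_neg at hc
      exact ⟨a, ⟨hm, hc⟩, le_refl a⟩

end Statement7Aux

open PaperDefs in
/-- Theorem 1.5. Let `I` be a full-supported matroidal ideal of degree
`d ≥ 2`. Then `I` is unmixed iff for every `i`, the colon ideal `(I : x_i)` is unmixed and
`height I = height (I : x_i)`. -/
theorem statement7 {k : Type*} [Field k] {n d : ℕ} (hd : 2 ≤ d)
    (I : Ideal (MvPolynomial (Fin n) k))
    (hI : IsMatroidal I d) (hfull : FullSupported I) :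
    IsUnmixed I ↔
      ∀ i : Fin n, IsUnmixed (colonVar I i) ∧ ht I = ht (colonVar I i) := by
  classical
  obtain ⟨⟨⟨S, hS⟩, hbot, hdeg, -⟩, hsq⟩ := hI
  have hGspan : I = Ideal.span ((fun a => (MvPolynomial.monomial a (1 : k))) '' minGens I) := by
    refine le_antisymm ?_ ?_
    · intro f hf
      rw [Statement7Aux.memspan]
      intro a ha
      have hf' : f ∈ Ideal.span ((fun a => (MvPolynomial.monomial a (1 : k))) '' S) := hS ▸ hf
      rw [Statement7Aux.memspan] at hf'
      obtain ⟨s, hsS, hsa⟩ := hf' a ha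
      have hsI : (monomial s (1:k)) ∈ I := by
        rw [hS]; exact Ideal.subset_span ⟨s, hsS, rfl⟩
      obtain ⟨b, hbG, hbs⟩ := Statement7Aux.exists_minGen (edeg s) s le_rfl hsI
      exact ⟨b, hbG, le_trans hbs hsa⟩
    · rw [Ideal.span_le]
      rintro - ⟨b, hb, rfl⟩
      exact hb.1
  have memI : ∀ f : MvPolynomial (Fin n) k,
      f ∈ I ↔ ∀ a ∈ f.support, ∃ b ∈ minGens I, b ≤ a := by
    intro f
    conv_lhs => rw [hGspan]
    exact Statement7Aux.memspan
  rcases Nat.eq_zero_or_pos n with hn | hn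
  · exfalso
    obtain ⟨f, hfI, hf0⟩ := (Submodule.ne_bot_iff I).mp hbot
    obtain ⟨a, ha⟩ := MvPolynomial.support_nonempty.mpr hf0
    obtain ⟨b, hbG, -⟩ := (memI f).mp hfI a ha
    have hedeg := hdeg b hbG
    subst hn
    simp [edeg] at hedeg
    omega
  have i0 : Fin n := ⟨0, hn⟩
  have monoI : ∀ a : Fin n →₀ ℕ, (monomial a (1:k)) ∈ I ↔ ∃ b ∈ minGens I, b ≤ a := by
    intro a
    conv_lhs => rw [hGspan]
    exact Statement7Aux.mono_memspan
  have hnotmem : ∀ a : Fin n →₀ ℕ, edeg a < d → (monomial a (1:k)) ∉ I := by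
    intro a ha hmem
    obtain ⟨b, hbG, hble⟩ := (monoI a).mp hmem
    have := Statement7Aux.edeg_mono hble
    rw [hdeg b hbG] at this
    omega
  have hXnotI : ∀ i : Fin n, (X i : MvPolynomial (Fin n) k) ∉ I := fun i h =>
    hnotmem (Finsupp.single i 1) (by rw [Statement7Aux.edeg_single]; omega) h
  have hmemcol : ∀ (i : Fin n) (f : MvPolynomial (Fin n) k),
      f ∈ colonVar I i ↔ f * X i ∈ I := fun i f => Ideal.mem_colon_span_singleton
  have hcoltop : ∀ i, colonVar I i ≠ ⊤ := by
    intro i h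
    apply hXnotI i
    have h1 : (1 : MvPolynomial (Fin n) k) ∈ colonVar I i := h ▸ Submodule.mem_top
    rw [hmemcol, one_mul] at h1
    exact h1
  have colon_eq : ∀ i, colonVar I i =
      Ideal.span ((fun a => (MvPolynomial.monomial a (1 : k))) ''
        ((fun b => b - Finsupp.single i (b i)) '' minGens I)) := by
    intro i
    ext f
    rw [hmemcol, Statement7Aux.memspan]
    have hXi : (X i : MvPolynomial (Fin n) k) = monomial (Finsupp.single i 1) 1 := rfl
    rw [hXi, memI, Statement7Aux.support_mul_monomial]
    constructor
    · intro h a ha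
      obtain ⟨b, hbG, hble⟩ := h (a + Finsupp.single i 1) (Finset.mem_map.mpr ⟨a, ha, rfl⟩)
      refine ⟨b - Finsupp.single i (b i), ⟨b, hbG, rfl⟩, Finsupp.le_def.mpr fun j => ?_⟩
      rw [Finsupp.tsub_apply, Finsupp.single_apply]
      rcases eq_or_ne i j with rfl | hne
      · simp
      · have h2 := Finsupp.le_def.mp hble j
        rw [Finsupp.add_apply, Finsupp.single_apply, if_neg hne] at h2
        simp only [if_neg hne]
        omega
    · intro h a' ha'
      obtain ⟨a, ha, rfl⟩ := Finset.mem_map.mp ha'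
      rw [addRightEmbedding_apply]
      obtain ⟨-, ⟨b, hbG, rfl⟩, hble⟩ := h a ha
      refine ⟨b, hbG, Finsupp.le_def.mpr fun j => ?_⟩
      have hb' := Finsupp.le_def.mp hble j
      rw [Finsupp.tsub_apply, Finsupp.single_apply] at hb'
      rw [Finsupp.add_apply, Finsupp.single_apply]
      have hsqb := hsq b hbG j
      split_ifs at hb' ⊢ <;> omega
  have hsqcol : ∀ i : Fin n,
      ∀ b' ∈ ((fun b => b - Finsupp.single i (b i)) '' minGens I), SqFree b' := by
    rintro i - ⟨b, hbG, rfl⟩ j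
    have h1 : (b - Finsupp.single i (b i)) j ≤ b j := by
      rw [Finsupp.tsub_apply]; omega
    exact le_trans h1 (hsq b hbG j)
  have hassI : ∀ q ∈ I.minimalPrimes,
      q ∈ associatedPrimes (MvPolynomial (Fin n) k) (MvPolynomial (Fin n) k ⧸ I) := by
    intro q hq
    rw [hGspan] at hq ⊢
    exact Statement7Aux.minPrimes_subset_ass (minGens I) hsq hq
  have hassCol : ∀ i : Fin n, ∀ q ∈ (colonVar I i).minimalPrimes,
      q ∈ associatedPrimes (MvPolynomial (Fin n) k)
        (MvPolynomial (Fin n) k ⧸ colonVar I i) := by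
    intro i q hq
    rw [colon_eq i] at hq ⊢
    exact Statement7Aux.minPrimes_subset_ass _ (hsqcol i) hq
  have hvar : ∀ p ∈ associatedPrimes (MvPolynomial (Fin n) k) (MvPolynomial (Fin n) k ⧸ I),
      ∃ i, (X i : MvPolynomial (Fin n) k) ∉ p := by
    intro p hp
    by_contra hc
    push_neg at hc
    obtain ⟨hpp, y, hy⟩ := isAssociatedPrime_iff.mp hp
    obtain ⟨f, rfl⟩ := Ideal.Quotient.mk_surjective y
    have hfI : f ∉ I := by
      intro hf
      have h1 : (1 : MvPolynomial (Fin n) k) ∈ p := by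
        rw [hy, Submodule.mem_colon_singleton, Submodule.mem_bot, Statement7Aux.smul_mk, one_mul,
          Ideal.Quotient.eq_zero_iff_mem]
        exact hf
      exact hpp.ne_top ((Ideal.eq_top_iff_one p).mpr h1)
    rw [memI] at hfI
    push_neg at hfI
    obtain ⟨a, ha, hano⟩ := hfI
    have hXf : ∀ i : Fin n, ∃ b ∈ minGens I, b ≤ a + Finsupp.single i 1 := by
      intro i
      have hXp : (X i : MvPolynomial (Fin n) k) ∈ p := hc i
      rw [hy, Submodule.mem_colon_singleton, Submodule.mem_bot, Statement7Aux.smul_mk,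
        Ideal.Quotient.eq_zero_iff_mem, mul_comm] at hXp
      have hXi : (X i : MvPolynomial (Fin n) k) = monomial (Finsupp.single i 1) 1 := rfl
      rw [hXi, memI] at hXp
      exact hXp (a + Finsupp.single i 1)
        (by rw [Statement7Aux.support_mul_monomial]; exact Finset.mem_map.mpr ⟨a, ha, rfl⟩)
    have ha0 : ∀ i, a i = 0 := by
      intro i
      obtain ⟨b, hbG, hble⟩ := hXf i
      have hnb := hano b hbG
      rw [Finsupp.le_def] at hnb
      push_neg at hnb
      obtain ⟨j, hj⟩ := hnb
      have hb2 := Finsupp.le_def.mp hble j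
      rw [Finsupp.add_apply, Finsupp.single_apply] at hb2
      have hsqb := hsq b hbG j
      rcases eq_or_ne i j with rfl | hne
      · simp only [if_pos rfl] at hb2
        omega
      · rw [if_neg hne] at hb2
        omega
    have haz : a = 0 := Finsupp.ext fun i => ha0 i
    obtain ⟨b, hbG, hble⟩ := hXf i0
    rw [haz, zero_add] at hble
    have hle := Statement7Aux.edeg_mono hble
    rw [hdeg b hbG, Statement7Aux.edeg_single] at hle
    omega
  constructor
  · intro hun i
    have hIle : I ≤ colonVar I i := fun r hr =>
      (hmemcol i r).mpr (I.mul_mem_right _ hr)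
    constructor
    · intro p hp q hq
      exact hun p (Statement7Aux.isAss_of_colon hp) q (Statement7Aux.isAss_of_colon hq)
    · haveI : Nontrivial (MvPolynomial (Fin n) k ⧸ colonVar I i) :=
        Ideal.Quotient.nontrivial_iff.mpr (hcoltop i)
      obtain ⟨p, hp⟩ := associatedPrimes.nonempty (MvPolynomial (Fin n) k)
        (MvPolynomial (Fin n) k ⧸ colonVar I i)
      have hpI : p ∈ associatedPrimes (MvPolynomial (Fin n) k)
          (MvPolynomial (Fin n) k ⧸ I) := Statement7Aux.isAss_of_colon hp
      have h1 : ht I = ht p := Statement7Aux.ht_eq_of_ass hun hassI hpI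
      have h2 : ht (colonVar I i) ≤ ht p :=
        Statement7Aux.ht_mono (Statement7Aux.le_of_isAssociated hp)
      have h3 : ht I ≤ ht (colonVar I i) := Statement7Aux.ht_mono hIle
      exact le_antisymm h3 (h2.trans (le_of_eq h1.symm))
  · intro h p hp q hq
    have key : ∀ p' ∈ associatedPrimes (MvPolynomial (Fin n) k)
        (MvPolynomial (Fin n) k ⧸ I), ht p' = ht I := by
      intro p' hp'
      obtain ⟨i, hi⟩ := hvar p' hp'
      have hpJ : p' ∈ associatedPrimes (MvPolynomial (Fin n) k)
          (MvPolynomial (Fin n) k ⧸ colonVar I i) :=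
        Statement7Aux.isAss_colon_of_not_mem hp' hi
      have h1 : ht (colonVar I i) = ht p' :=
        Statement7Aux.ht_eq_of_ass (h i).1 (hassCol i) hpJ
      rw [← h1, ← (h i).2]
    rw [key p hp, key q hq]
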